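/- arXiv:2303.02791 — 2 statements merged into one kernel-verified Lean document; each statement's English description precedes it below -/
import Mathlib

section
/- Let I be a squarefree monomial ideal in the polynomial ring S = K[x_1,...,x_n] over a field K, and let s ≥ 1 be an integer. Then the squarefree part I^{s} of the s-th symbolic power I^(s) is nonzero if and only if s ≤ ht(I), where ht(I) is the height of I. Moreover, if I is unmixed (all associated primes of S/I have the same height), then I^{ht(I)} is a principal ideal. -/
open MvPolynomial

noncomputable section

/-! Generalities on graded pieces, Betti numbers and Castelnuovo–Mumford regularity
of homogeneous ideals in a polynomial ring, via the Koszul complex. -/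

variable (K : Type) [Field K] (n : ℕ)

/-- The degree `d` graded piece of an ideal `I ⊆ K[x_1, …, x_n]`, as a `K`-subspace
(`⊥` for negative `d`). -/
def degPiece (I : Ideal (MvPolynomial (Fin n) K)) (d : ℤ) :
    Submodule K (MvPolynomial (Fin n) K) :=
  if 0 ≤ d then (Submodule.restrictScalars K I) ⊓ homogeneousSubmodule (Fin n) K d.toNat
  else ⊥

theorem mulX_mem (I : Ideal (MvPolynomial (Fin n) K)) (k : Fin n) (d : ℤ)
    {x : MvPolynomial (Fin n) K} (hx : x ∈ degPiece K n I d) :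
    (X k : MvPolynomial (Fin n) K) * x ∈ degPiece K n I (d + 1) := by
  by_cases h : 0 ≤ d
  · rw [degPiece, if_pos h, Submodule.mem_inf] at hx
    rw [degPiece, if_pos (by omega : (0:ℤ) ≤ d + 1), Submodule.mem_inf]
    constructor
    · exact Ideal.mul_mem_left I _ hx.1
    · rw [mem_homogeneousSubmodule]
      have h2 := (isHomogeneous_X K k).mul ((mem_homogeneousSubmodule _ _).1 hx.2)
      have h3 : (d + 1).toNat = 1 + d.toNat := by omega
      rw [h3]
      exact h2
  · rw [degPiece, if_neg h, Submodule.mem_bot] at hx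
    subst hx
    rw [mul_zero]
    exact Submodule.zero_mem _

/-- Multiplication by the variable `x_k`, as a map between graded pieces. -/
def mulXmap (I : Ideal (MvPolynomial (Fin n) K)) (k : Fin n) (d e : ℤ) (h : e = d + 1) :
    degPiece K n I d →ₗ[K] degPiece K n I e :=
  LinearMap.restrict (LinearMap.mulLeft K (X k)) (by
    intro x hx
    subst h
    simpa using mulX_mem K n I k d hx)

/-- The differential, in internal degree `j`, of the complex obtained by tensoring the
ideal `I` with the Koszul complex on `x_1, …, x_n`; its homology computes
`Tor_i(I, K)_j`, whose dimension is the graded Betti number `β_{i,j}(I)`. -/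
def koszulD (I : Ideal (MvPolynomial (Fin n) K)) (j i : ℕ) :
    ({T : Finset (Fin n) // T.card = i + 1} → degPiece K n I ((j : ℤ) - (i + 1)))
      →ₗ[K] ({T : Finset (Fin n) // T.card = i} → degPiece K n I ((j : ℤ) - i)) :=
  LinearMap.pi fun T => ∑ k : Fin n,
    if h : k ∈ T.1 then 0
    else ((-1 : K) ^ (T.1.filter (fun l => l < k)).card) •
      ((mulXmap K n I k ((j : ℤ) - (i + 1)) ((j : ℤ) - i) (by ring)).comp
        (LinearMap.proj (⟨insert k T.1, by
          rw [Finset.card_insert_of_notMem h, T.2]⟩ : {T : Finset (Fin n) // T.card = i + 1})))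

/-- The cycles of the (internal degree `j`) Koszul complex of `I` in homological degree `i`. -/
def kerChain (I : Ideal (MvPolynomial (Fin n) K)) (j : ℕ) :
    (i : ℕ) → Submodule K ({T : Finset (Fin n) // T.card = i} → degPiece K n I ((j : ℤ) - i))
  | 0 => ⊤
  | (i + 1) => LinearMap.ker (koszulD K n I j i)

/-- The graded Betti number `β_{i,j}(I) = dim_K Tor_i(I, K)_j`. -/
def betti (I : Ideal (MvPolynomial (Fin n) K)) (i j : ℕ) : ℕ :=
  Module.finrank K (kerChain K n I j i) -
    Module.finrank K
      ((LinearMap.range (koszulD K n I j i) ⊓ kerChain K n I j i) : Submodule K _)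

/-- The Castelnuovo–Mumford regularity `reg(I) = max { j - i | β_{i,j}(I) ≠ 0 }`. -/
def reg (I : Ideal (MvPolynomial (Fin n) K)) : ℤ :=
  sSup {r : ℤ | ∃ i j : ℕ, betti K n I i j ≠ 0 ∧ r = (j : ℤ) - i}

/-- The squarefree part of a monomial ideal: the ideal generated by the squarefree
monomials belonging to it. -/
def sqfreePart (I : Ideal (MvPolynomial (Fin n) K)) : Ideal (MvPolynomial (Fin n) K) :=
  Ideal.span {m | m ∈ I ∧ ∃ A : Finset (Fin n), m = ∏ v ∈ A, X v}

/-- The `s`-th symbolic power of a (squarefree monomial) ideal: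
the intersection of the `s`-th powers of its minimal primes; `S` for `s ≤ 0`. -/
def symbPow (I : Ideal (MvPolynomial (Fin n) K)) (s : ℤ) : Ideal (MvPolynomial (Fin n) K) :=
  if s ≤ 0 then ⊤ else ⨅ p ∈ I.minimalPrimes, p ^ s.toNat

/-- `ssp I s` is `I^{s}`, the squarefree part of the `s`-th symbolic power of `I`. -/
def ssp (I : Ideal (MvPolynomial (Fin n) K)) (s : ℤ) : Ideal (MvPolynomial (Fin n) K) :=
  sqfreePart K n (symbPow K n I s)

/-- `sqPow I s` is `I^[s]`, the squarefree part of the ordinary power `I^s`. -/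
def sqPow (I : Ideal (MvPolynomial (Fin n) K)) (s : ℕ) : Ideal (MvPolynomial (Fin n) K) :=
  sqfreePart K n (I ^ s)

/-- The height of an ideal: the minimum of the heights of its minimal primes. -/
def heightI (I : Ideal (MvPolynomial (Fin n) K)) : ℕ∞ :=
  ⨅ p : I.minimalPrimes, Order.height (⟨p.1, p.2.1.1⟩ : PrimeSpectrum (MvPolynomial (Fin n) K))

/-- The colon ideal `(I : u)`. -/
def colonOf (I : Ideal (MvPolynomial (Fin n) K)) (u : MvPolynomial (Fin n) K) :
    Ideal (MvPolynomial (Fin n) K) :=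
  Submodule.colon I (Ideal.span {u})

/-- `u` is a minimal monomial generator of the monomial ideal `I`:
`u` is a monomial belonging to `I` and `u/x_k ∉ I` for every variable `x_k` dividing `u`. -/
def IsMinGen (I : Ideal (MvPolynomial (Fin n) K)) (u : MvPolynomial (Fin n) K) : Prop :=
  ∃ d : Fin n →₀ ℕ, u = monomial d (1 : K) ∧ u ∈ I ∧
    ∀ k : Fin n, d k ≠ 0 → monomial (d - Finsupp.single k 1) (1 : K) ∉ I

/-! Graph-theoretic notions. -/

/-- The graph obtained from `G` by deleting the vertices in `U` (and all edges meeting `U`),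
on the same vertex set. -/
def delVerts (G : SimpleGraph (Fin n)) (U : Set (Fin n)) : SimpleGraph (Fin n) where
  Adj v w := G.Adj v w ∧ v ∉ U ∧ w ∉ U
  symm := ⟨fun _ _ h => ⟨h.1.symm, h.2.2, h.2.1⟩⟩
  loopless := ⟨fun v h => G.loopless.1 v h.1⟩


/-- The edge ideal `I(G)` of a graph `G` on the vertex set `{x_1, …, x_n}`. -/
def edgeIdeal (G : SimpleGraph (Fin n)) : Ideal (MvPolynomial (Fin n) K) :=
  Ideal.span {m | ∃ v w, G.Adj v w ∧ m = X v * X w}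

/-- `a`, `b` enumerate the endpoints of a matching of `G` of size `k`:
the edges `a i b i` are pairwise disjoint edges of `G`. -/
def IsMatching (G : SimpleGraph (Fin n)) (k : ℕ) (a b : Fin k → Fin n) : Prop :=
  (∀ i, G.Adj (a i) (b i)) ∧
    ∀ i j, i ≠ j → a i ≠ a j ∧ b i ≠ b j ∧ a i ≠ b j

/-- The matching number `match(G)`. -/
def matchNum (G : SimpleGraph (Fin n)) : ℕ :=
  sSup {k | ∃ a b : Fin k → Fin n, IsMatching n G k a b}

/-- An induced matching: a matching such that no edge of `G` other than the matching edges
joins two of its vertices. -/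
def IsInducedMatching (G : SimpleGraph (Fin n)) (k : ℕ) (a b : Fin k → Fin n) : Prop :=
  IsMatching n G k a b ∧ ∀ i j, i ≠ j →
    ¬ G.Adj (a i) (a j) ∧ ¬ G.Adj (a i) (b j) ∧ ¬ G.Adj (b i) (a j) ∧ ¬ G.Adj (b i) (b j)

/-- The induced matching number `ind-match(G)`. -/
def indMatchNum (G : SimpleGraph (Fin n)) : ℕ :=
  sSup {k | ∃ a b : Fin k → Fin n, IsInducedMatching n G k a b}

/-- An ordered matching `{a_i b_i}`: the `a_i` form an independent set and
`a_i b_j ∈ E(G)` implies `i ≤ j`. -/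
def IsOrderedMatching (G : SimpleGraph (Fin n)) (k : ℕ) (a b : Fin k → Fin n) : Prop :=
  IsMatching n G k a b ∧ (∀ i j, ¬ G.Adj (a i) (a j)) ∧ ∀ i j, G.Adj (a i) (b j) → i ≤ j

/-- The ordered matching number `ord-match(G)`. -/
def ordMatchNum (G : SimpleGraph (Fin n)) : ℕ :=
  sSup {k | ∃ a b : Fin k → Fin n, IsOrderedMatching n G k a b}

/-- A graph is chordal if it has no induced cycle of length at least four. -/
def IsChordal (G : SimpleGraph (Fin n)) : Prop :=
  ∀ k : ℕ, 4 ≤ k → ∀ f : ZMod k → Fin n, Function.Injective f →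
    ¬ (∀ i j : ZMod k, G.Adj (f i) (f j) ↔ (j = i + 1 ∨ i = j + 1))


/-- The star triangle graph with `t` triangles: vertex `0` is the common vertex of all the
triangles, and for `0 ≤ i < t` the vertices `2i+1`, `2i+2` are the other two vertices of the
`i`-th triangle. -/
def starTriangle (t : ℕ) : SimpleGraph (Fin (2 * t + 1)) where
  Adj u v := u ≠ v ∧ ((u : ℕ) = 0 ∨ (v : ℕ) = 0 ∨ ((u : ℕ) - 1) / 2 = ((v : ℕ) - 1) / 2)
  symm := by
    constructor
    intro u v h
    exact ⟨h.1.symm, by tauto⟩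
  loopless := by constructor; intro u h; exact h.1 rfl

end
noncomputable section Aux

variable {K : Type} [Field K] {n : ℕ}

/-- The monomial prime generated by the variables in `C`. -/
def PC (K : Type) [Field K] {n : ℕ} (C : Finset (Fin n)) : Ideal (MvPolynomial (Fin n) K) :=
  Ideal.span ((fun v => (X v : MvPolynomial (Fin n) K)) '' ↑C)

lemma mem_PC {C : Finset (Fin n)} {f : MvPolynomial (Fin n) K} :
    f ∈ PC K C ↔ ∀ e ∈ f.support, ∃ v ∈ C, e v ≠ 0 := by
  rw [PC, mem_ideal_span_X_image]
  simp

lemma support_X' (v : Fin n) : (X v : MvPolynomial (Fin n) K).support = {Finsupp.single v 1} :=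
  MvPolynomial.support_X

lemma X_mem_PC {C : Finset (Fin n)} {v : Fin n} :
    (X v : MvPolynomial (Fin n) K) ∈ PC K C ↔ v ∈ C := by
  rw [mem_PC]
  constructor
  · intro h
    obtain ⟨w, hw, hne⟩ := h (Finsupp.single v 1) (by rw [support_X']; simp)
    rw [Finsupp.single_apply_ne_zero] at hne
    exact hne.1 ▸ hw
  · intro hv e he
    rw [support_X'] at he
    simp only [Finset.mem_singleton] at he
    subst he
    exact ⟨v, hv, by simp⟩

lemma PC_mono {C D : Finset (Fin n)} (h : C ⊆ D) : PC K C ≤ PC K D :=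
  Ideal.span_mono (Set.image_mono (by exact_mod_cast h))

/-- `PC` is the kernel of the algebra map killing the variables in `C`. -/
lemma PC_eq_ker (C : Finset (Fin n)) :
    PC K C = RingHom.ker ((aeval (fun v : Fin n =>
      if v ∈ C then 0 else (X v : MvPolynomial (Fin n) K))).toRingHom) := by
  ext f
  rw [RingHom.mem_ker, mem_PC]
  have key : (aeval (fun v : Fin n =>
      if v ∈ C then 0 else (X v : MvPolynomial (Fin n) K))) f =
      ∑ e ∈ f.support.filter (fun e => ∀ v ∈ C, e v = 0), monomial e (coeff e f) := by
    conv_lhs => rw [f.as_sum]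
    rw [map_sum, ← Finset.sum_filter_add_sum_filter_not f.support (fun e => ∀ v ∈ C, e v = 0)]
    have h1 : ∀ e ∈ f.support.filter (fun e => ∀ v ∈ C, e v = 0),
        (aeval (fun v : Fin n => if v ∈ C then 0 else (X v : MvPolynomial (Fin n) K)))
          (monomial e (coeff e f)) = monomial e (coeff e f) := by
      intro e he
      rw [Finset.mem_filter] at he
      rw [aeval_monomial]
      have : ∀ v ∈ e.support, (if v ∈ C then 0 else (X v : MvPolynomial (Fin n) K)) ^ e v
          = X v ^ e v := by
        intro v hv
        have hvC : v ∉ C := fun hc => (Finsupp.mem_support_iff.1 hv) (he.2 v hc)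
        rw [if_neg hvC]
      rw [Finsupp.prod]
      rw [Finset.prod_congr rfl this]
      rw [monomial_eq, Finsupp.prod, algebraMap_eq]
    have h2 : ∀ e ∈ f.support.filter (fun e => ¬ ∀ v ∈ C, e v = 0),
        (aeval (fun v : Fin n => if v ∈ C then 0 else (X v : MvPolynomial (Fin n) K)))
          (monomial e (coeff e f)) = 0 := by
      intro e he
      rw [Finset.mem_filter] at he
      push_neg at he
      obtain ⟨v, hvC, hev⟩ := he.2
      rw [aeval_monomial, Finsupp.prod]
      have hv : v ∈ e.support := Finsupp.mem_support_iff.2 hev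
      rw [Finset.prod_eq_zero hv (by rw [if_pos hvC]; exact zero_pow hev)]
      rw [mul_zero]
    rw [Finset.sum_congr rfl h1, Finset.sum_congr rfl h2, Finset.sum_const_zero, add_zero]
  simp only [AlgHom.toRingHom_eq_coe, RingHom.coe_coe]
  rw [key]
  constructor
  · intro h
    have : f.support.filter (fun e => ∀ v ∈ C, e v = 0) = ∅ := by
      rw [Finset.filter_eq_empty_iff]
      intro e he hall
      obtain ⟨v, hv, hne⟩ := h e he
      exact hne (hall v hv)
    rw [this, Finset.sum_empty]
  · intro h e he
    by_contra hcon
    push_neg at hcon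
    have hmem : e ∈ f.support.filter (fun e => ∀ v ∈ C, e v = 0) :=
      Finset.mem_filter.2 ⟨he, hcon⟩
    have : coeff e (∑ x ∈ f.support.filter (fun e => ∀ v ∈ C, e v = 0),
        (monomial x) (coeff x f)) = coeff e f := by
      rw [coeff_sum]
      rw [Finset.sum_eq_single_of_mem e hmem]
      · rw [coeff_monomial, if_pos rfl]
      · intro b _ hbe
        rw [coeff_monomial, if_neg hbe]
    rw [h] at this
    simp only [coeff_zero] at this
    exact Finsupp.mem_support_iff.1 he this.symm

instance PC_isPrime (C : Finset (Fin n)) : (PC K C).IsPrime := by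
  rw [PC_eq_ker]
  exact RingHom.ker_isPrime _

end Aux
noncomputable section Aux2

variable {K : Type} [Field K] {n : ℕ}

/-- The squarefree monomial with support `A`. -/
def sqm (K : Type) [Field K] {n : ℕ} (A : Finset (Fin n)) : MvPolynomial (Fin n) K :=
  ∏ v ∈ A, X v

def expA {n : ℕ} (A : Finset (Fin n)) : Fin n →₀ ℕ := ∑ v ∈ A, Finsupp.single v 1

lemma expA_apply {A : Finset (Fin n)} (w : Fin n) : expA A w = if w ∈ A then 1 else 0 := by
  classical
  rw [expA, Finsupp.finset_sum_apply]
  simp [Finsupp.single_apply, Finset.sum_ite_eq]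

lemma sqm_eq_monomial (A : Finset (Fin n)) : sqm K A = monomial (expA A) 1 := by
  classical
  induction A using Finset.induction with
  | empty => simp [sqm, expA]
  | insert _ _ h ih =>
    rename_i v A
    rw [sqm, Finset.prod_insert h, ← sqm, ih, X, monomial_mul, one_mul, expA, expA,
      Finset.sum_insert h]

lemma sqm_ne_zero (A : Finset (Fin n)) : sqm K A ≠ 0 := by
  rw [sqm_eq_monomial]
  intro h
  have := MvPolynomial.coeff_monomial (expA A) (expA A) (1 : K)
  rw [h, if_pos rfl, coeff_zero] at this
  exact one_ne_zero this.symm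

lemma support_sqm (A : Finset (Fin n)) : (sqm K A).support = {expA A} := by
  classical
  rw [sqm_eq_monomial, support_monomial, if_neg one_ne_zero]

end Aux2
noncomputable section Aux3

variable {K : Type} [Field K] {n : ℕ}

lemma prod_mem_pow_card {p : Ideal (MvPolynomial (Fin n) K)} {T : Finset (Fin n)}
    {g : Fin n → MvPolynomial (Fin n) K} (hg : ∀ v ∈ T, g v ∈ p) :
    ∏ v ∈ T, g v ∈ p ^ T.card := by
  classical
  induction T using Finset.induction with
  | empty => simp
  | insert _ _ h ih =>
    rename_i v T
    rw [Finset.prod_insert h, Finset.card_insert_of_notMem h, pow_succ, mul_comm (p ^ T.card)]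
    exact Ideal.mul_mem_mul (hg v (Finset.mem_insert_self v T))
      (ih fun w hw => hg w (Finset.mem_insert_of_mem hw))

lemma sqm_mem_PC_pow {C A : Finset (Fin n)} {s : ℕ} (h : s ≤ (A ∩ C).card) :
    sqm K A ∈ PC K C ^ s := by
  classical
  obtain ⟨T, hTsub, hTcard⟩ := Finset.exists_subset_card_eq h
  have hTA : T ⊆ A := hTsub.trans Finset.inter_subset_left
  have : sqm K A = (∏ v ∈ A \ T, X v) * ∏ v ∈ T, X v := by
    rw [sqm, Finset.prod_sdiff hTA]
  rw [this]
  have hmem : ∏ v ∈ T, (X v : MvPolynomial (Fin n) K) ∈ PC K C ^ s := by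
    rw [← hTcard]
    exact prod_mem_pow_card fun v hv =>
      X_mem_PC.2 (Finset.mem_of_subset Finset.inter_subset_right (hTsub hv))
  exact Ideal.mul_mem_left _ _ hmem

lemma sqm_mem_PC_pow_iff {C A : Finset (Fin n)} {s : ℕ} :
    sqm K A ∈ PC K C ^ s ↔ s ≤ (A ∩ C).card := by
  classical
  refine ⟨fun hmem => ?_, sqm_mem_PC_pow⟩
  by_contra hlt
  push_neg at hlt
  set Φ : MvPolynomial (Fin n) K →ₐ[K] Polynomial (MvPolynomial (Fin n) K) :=
    aeval (fun v => if v ∈ C then Polynomial.X * Polynomial.C (X v) else Polynomial.C (X v))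
    with hΦ
  have hmap : Ideal.map Φ.toRingHom (PC K C) ≤ Ideal.span {Polynomial.X} := by
    rw [PC, Ideal.map_span, Ideal.span_le]
    rintro y ⟨x, ⟨v, hv, rfl⟩, rfl⟩
    rw [SetLike.mem_coe, Ideal.mem_span_singleton]
    simp only [AlgHom.toRingHom_eq_coe, RingHom.coe_coe, hΦ, aeval_X]
    rw [if_pos (Finset.mem_coe.1 hv)]
    exact Dvd.intro _ rfl
  have h2 : Φ (sqm K A) ∈ Ideal.span {Polynomial.X} ^ s := by
    have := Ideal.mem_map_of_mem Φ.toRingHom hmem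
    rw [Ideal.map_pow] at this
    exact Ideal.pow_right_mono hmap s this
  rw [Ideal.span_singleton_pow, Ideal.mem_span_singleton] at h2
  have hval : Φ (sqm K A) = Polynomial.X ^ (A ∩ C).card * Polynomial.C (sqm K A) := by
    rw [sqm, map_prod]
    have e0 : ∀ v ∈ A, Φ (X v) =
        Polynomial.X ^ (if v ∈ C then 1 else 0) * Polynomial.C (X v) := by
      intro v _
      rw [hΦ, aeval_X]
      by_cases hv : v ∈ C
      · rw [if_pos hv, if_pos hv, pow_one]
      · rw [if_neg hv, if_neg hv, pow_zero, one_mul]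
    rw [Finset.prod_congr rfl e0, Finset.prod_mul_distrib, ← map_prod,
      Finset.prod_pow_eq_pow_sum, ← sqm]
    congr 2
    rw [Finset.sum_ite_mem, Finset.sum_const, smul_eq_mul, mul_one]
  obtain ⟨g, hg⟩ := h2
  have : Polynomial.coeff (Polynomial.X ^ s * g) (A ∩ C).card = sqm K A := by
    have h3 := Polynomial.coeff_X_pow_mul (Polynomial.C (sqm K A)) (A ∩ C).card 0
    rw [zero_add, Polynomial.coeff_C_zero] at h3
    rw [← hg, hval, h3]
  rw [mul_comm, Polynomial.coeff_mul_X_pow'] at this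
  rw [if_neg (by omega)] at this
  exact sqm_ne_zero A this.symm

end Aux3
noncomputable section Aux4

/-- Core chain-collapsing induction (Coquand–Lombardi style): if a nontrivial combination
of monomials in elements `f i` chosen between consecutive primes of a chain lies in the
bottom prime, then one of the coefficients lies in the top prime. -/
lemma chain_relation {R : Type*} [CommRing R] :
    ∀ (m : ℕ) (q : Fin (m + 1) → Ideal R), (∀ i, (q i).IsPrime) →
    (∀ i : Fin m, q i.castSucc ≤ q i.succ) →
    ∀ (f : Fin m → R), (∀ i, f i ∈ q i.succ) → (∀ i, f i ∉ q i.castSucc) →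
    ∀ (T : Finset (Fin m → ℕ)), T.Nonempty → ∀ (b : (Fin m → ℕ) → R),
    (∑ β ∈ T, b β * ∏ i, f i ^ β i) ∈ q 0 →
    ∃ β ∈ T, b β ∈ q (Fin.last m) := by
  intro m
  induction m with
  | zero =>
    intro q _ _ f _ _ T hT b hrel
    obtain ⟨β0, hβ0⟩ := hT
    have hTsing : T = {β0} :=
      Finset.eq_singleton_iff_unique_mem.2 ⟨hβ0, fun x _ => Subsingleton.elim x β0⟩
    rw [hTsing, Finset.sum_singleton] at hrel
    refine ⟨β0, hβ0, ?_⟩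
    have : (∏ i : Fin 0, f i ^ β0 i) = 1 := Finset.prod_of_isEmpty _
    rw [this, mul_one] at hrel
    exact hrel
  | succ m ih =>
    intro q hprime hle f hf1 hf0 T hT b hrel
    classical
    set a : ℕ := (T.image (fun β => β 0)).min' (hT.image _) with ha
    have hmin : ∀ β ∈ T, a ≤ β 0 := fun β hβ =>
      Finset.min'_le _ _ (Finset.mem_image_of_mem _ hβ)
    obtain ⟨βa, hβaT, hβa0⟩ : ∃ β ∈ T, β 0 = a := by
      have := Finset.min'_mem (T.image (fun β => β 0)) (hT.image _)
      rw [Finset.mem_image] at this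
      obtain ⟨β, hβ, hβ0⟩ := this
      exact ⟨β, hβ, hβ0⟩
    clear_value a
    set W1 : R := ∑ β ∈ T.filter (fun β => β 0 = a),
      b β * ∏ i : Fin m, f i.succ ^ β i.succ with hW1
    set W2 : R := ∑ β ∈ T.filter (fun β => ¬ β 0 = a),
      b β * f 0 ^ (β 0 - a - 1) * ∏ i : Fin m, f i.succ ^ β i.succ with hW2
    have hdecomp : (∑ β ∈ T, b β * ∏ i, f i ^ β i) = f 0 ^ a * (W1 + f 0 * W2) := by
      rw [← Finset.sum_filter_add_sum_filter_not T (fun β => β 0 = a)]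
      have e1 : ∀ β ∈ T.filter (fun β => β 0 = a),
          b β * ∏ i, f i ^ β i = f 0 ^ a * (b β * ∏ i : Fin m, f i.succ ^ β i.succ) := by
        intro β hβ
        have hb0 : β 0 = a := (Finset.mem_filter.1 hβ).2
        rw [Fin.prod_univ_succ, hb0]
        ring
      have e2 : ∀ β ∈ T.filter (fun β => ¬ β 0 = a),
          b β * ∏ i, f i ^ β i = f 0 ^ a *
            (f 0 * (b β * f 0 ^ (β 0 - a - 1) * ∏ i : Fin m, f i.succ ^ β i.succ)) := by
        intro β hβ
        have hb0 : ¬ β 0 = a := (Finset.mem_filter.1 hβ).2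
        have hge : a ≤ β 0 := hmin β (Finset.mem_filter.1 hβ).1
        have hlt' : a + 1 ≤ β 0 := Nat.succ_le_of_lt (lt_of_le_of_ne hge (Ne.symm hb0))
        obtain ⟨k, hk⟩ : ∃ k, β 0 = a + 1 + k := ⟨β 0 - (a + 1), (Nat.add_sub_cancel' hlt').symm⟩
        have h2 : β 0 - a - 1 = k := by rw [hk, Nat.sub_sub, Nat.add_sub_cancel_left]
        rw [h2, Fin.prod_univ_succ, hk, pow_add, pow_add, pow_one]
        ring
      rw [Finset.sum_congr rfl e1, Finset.sum_congr rfl e2, ← Finset.mul_sum, ← Finset.mul_sum,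
        ← hW1, ← Finset.mul_sum, ← hW2]
      ring
    rw [hdecomp] at hrel
    have hq0 : (q 0).IsPrime := hprime 0
    have hf00 : f 0 ∉ q 0 := by
      have := hf0 0
      rwa [Fin.castSucc_zero] at this
    have hsum : W1 + f 0 * W2 ∈ q 0 := by
      rcases hq0.mem_or_mem hrel with h | h
      · exact absurd (hq0.mem_of_pow_mem _ h) hf00
      · exact h
    have hf01 : f 0 ∈ q 1 := by
      have := hf1 0
      rwa [Fin.succ_zero_eq_one] at this
    have hle0 : q 0 ≤ q 1 := by
      have := hle 0
      rwa [Fin.castSucc_zero, Fin.succ_zero_eq_one] at this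
    have hW1mem : W1 ∈ q 1 := by
      have h1 : W1 + f 0 * W2 ∈ q 1 := hle0 hsum
      have h2 : f 0 * W2 ∈ q 1 := Ideal.mul_mem_right _ _ hf01
      have := Ideal.sub_mem _ h1 h2
      simpa using this
    -- apply induction hypothesis
    set T' : Finset (Fin m → ℕ) := (T.filter (fun β => β 0 = a)).image (fun β => β ∘ Fin.succ)
      with hT'
    have hcons : ∀ β ∈ T.filter (fun β => β 0 = a), Fin.cons a (β ∘ Fin.succ) = β := by
      intro β hβ
      have hb0 : β 0 = a := (Finset.mem_filter.1 hβ).2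
      funext i
      refine Fin.cases ?_ ?_ i
      · rw [Fin.cons_zero, hb0]
      · intro j
        rw [Fin.cons_succ]
        rfl
    have hW1' : W1 = ∑ γ ∈ T', b (Fin.cons a γ) * ∏ i : Fin m, f i.succ ^ γ i := by
      rw [hT', Finset.sum_image ?_]
      · refine Finset.sum_congr rfl fun β hβ => ?_
        rw [hcons β hβ]
        rfl
      · intro β hβ β' hβ' heq
        rw [← hcons β hβ, ← hcons β' hβ', show β ∘ Fin.succ = β' ∘ Fin.succ from heq]
    have hT'ne : T'.Nonempty := by
      refine ⟨βa ∘ Fin.succ, ?_⟩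
      rw [hT', Finset.mem_image]
      exact ⟨βa, Finset.mem_filter.2 ⟨hβaT, hβa0⟩, rfl⟩
    have hres := ih (fun i => q i.succ) (fun i => hprime i.succ)
      (fun i => by
        have := hle i.succ
        rwa [← Fin.succ_castSucc] at this)
      (fun i => f i.succ) (fun i => hf1 i.succ)
      (fun i => by
        have := hf0 i.succ
        rwa [← Fin.succ_castSucc] at this)
      T' hT'ne (fun γ => b (Fin.cons a γ))
      (by rw [← hW1']; simpa using hW1mem)
    obtain ⟨γ, hγT', hγ⟩ := hres
    rw [hT', Finset.mem_image] at hγT'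
    obtain ⟨β, hβ, hβγ⟩ := hγT'
    refine ⟨β, (Finset.mem_filter.1 hβ).1, ?_⟩
    have : Fin.cons a γ = β := by rw [← hβγ]; exact hcons β hβ
    rw [← this]
    have hlast : (Fin.last m).succ = Fin.last (m + 1) := by
      rw [Fin.succ_last]
    rw [← hlast]
    exact hγ

end Aux4
noncomputable section Aux5

variable {K : Type} [Field K] {n : ℕ}

lemma supported_PC_eq_zero {C : Finset (Fin n)} {x : MvPolynomial (Fin n) K}
    (hx : x ∈ MvPolynomial.supported K ((↑C : Set (Fin n))ᶜ)) (hPC : x ∈ PC K C) : x = 0 := by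
  by_contra h0
  obtain ⟨e, he⟩ := (MvPolynomial.support_nonempty.2 h0)
  obtain ⟨v, hvC, hev⟩ := mem_PC.1 hPC e he
  have hvvars : v ∈ x.vars := (mem_vars v).2 ⟨e, he, Finsupp.mem_support_iff.2 hev⟩
  have := (MvPolynomial.mem_supported.1 hx) hvvars
  exact this hvC

/-- The candidate spanning monomials: exponents supported in `C` with entries `≤ D`. -/
def φCD {n : ℕ} (C : Finset (Fin n)) (D : ℕ) (g : ↑C → Fin (D + 1)) : Fin n →₀ ℕ :=
  ∑ v ∈ C.attach, Finsupp.single ↑v (g v : ℕ)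

lemma φCD_apply {C : Finset (Fin n)} {D : ℕ} (g : ↑C → Fin (D + 1)) (w : Fin n) :
    φCD C D g w = if hw : w ∈ C then (g ⟨w, hw⟩ : ℕ) else 0 := by
  classical
  rw [φCD, Finsupp.finset_sum_apply]
  by_cases hw : w ∈ C
  · rw [dif_pos hw]
    rw [Finset.sum_eq_single_of_mem (⟨w, hw⟩ : ↑C) (Finset.mem_attach _ _)]
    · rw [Finsupp.single_apply, if_pos rfl]
    · intro b _ hb
      rw [Finsupp.single_apply, if_neg]
      intro hbw
      exact hb (Subtype.ext hbw)
  · rw [dif_neg hw]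
    refine Finset.sum_eq_zero fun b _ => ?_
    rw [Finsupp.single_apply, if_neg]
    intro hbw
    exact hw (hbw ▸ b.2)

open Classical in
def ECD (K : Type) [Field K] {n : ℕ} (C : Finset (Fin n)) (D : ℕ) :
    Finset (MvPolynomial (Fin n) K) :=
  (Finset.univ : Finset (↑C → Fin (D + 1))).image (fun g => monomial (φCD C D g) (1 : K))

lemma ECD_card {C : Finset (Fin n)} {D : ℕ} : (ECD K C D).card ≤ (D + 1) ^ C.card := by
  classical
  rw [ECD]
  refine (Finset.card_image_le).trans ?_
  rw [Finset.card_univ, Fintype.card_fun]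
  simp

lemma mem_span_ECD {C : Finset (Fin n)} {D : ℕ} {h : MvPolynomial (Fin n) K}
    (hdeg : h.totalDegree ≤ D) :
    h ∈ Submodule.span (MvPolynomial.supported K ((↑C : Set (Fin n))ᶜ))
      ((ECD K C D : Finset (MvPolynomial (Fin n) K)) : Set (MvPolynomial (Fin n) K)) := by
  classical
  rw [MvPolynomial.as_sum h]
  refine Submodule.sum_mem _ fun e he => ?_
  have hcne : coeff e h ≠ 0 := Finsupp.mem_support_iff.1 he
  have hev : ∀ v, e v ≤ D := by
    intro v
    by_cases hv : e v = 0
    · omega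
    · have h1 : e v ≤ e.sum fun _ x => x := by
        have : v ∈ e.support := Finsupp.mem_support_iff.2 hv
        exact Finset.single_le_sum (fun _ _ => Nat.zero_le _) this
      exact h1.trans ((MvPolynomial.le_totalDegree he).trans hdeg)
  set eC := Finsupp.filter (· ∈ C) e with heC
  set eN := Finsupp.filter (fun v => ¬ v ∈ C) e with heN
  have hsplit : eN + eC = e := by
    rw [heC, heN, add_comm]
    exact Finsupp.filter_pos_add_filter_neg e _
  have hbmem : (monomial eN (coeff e h) : MvPolynomial (Fin n) K) ∈
      MvPolynomial.supported K ((↑C : Set (Fin n))ᶜ) := by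
    rw [MvPolynomial.mem_supported, MvPolynomial.vars_monomial hcne]
    intro v hv
    simp only [heN, Finsupp.support_filter, Finset.coe_filter, Set.mem_setOf_eq] at hv
    exact hv.2
  set g : ↑C → Fin (D + 1) := fun v => ⟨e ↑v, Nat.lt_succ_of_le (hev ↑v)⟩ with hg
  have heCg : eC = φCD C D g := by
    ext w
    rw [φCD_apply]
    by_cases hw : w ∈ C
    · rw [dif_pos hw, heC, Finsupp.filter_apply_pos _ _ hw]
    · rw [dif_neg hw, heC, Finsupp.filter_apply_neg _ _ hw]
  have hEmem : (monomial eC (1 : K) : MvPolynomial (Fin n) K) ∈ ECD K C D := by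
    rw [ECD, Finset.mem_image]
    exact ⟨g, Finset.mem_univ _, by rw [heCg]⟩
  have key : (monomial e (coeff e h) : MvPolynomial (Fin n) K) =
      (⟨monomial eN (coeff e h), hbmem⟩ : MvPolynomial.supported K ((↑C : Set (Fin n))ᶜ)) •
        monomial eC (1 : K) := by
    rw [Subalgebra.smul_def]
    show _ = monomial eN (coeff e h) * monomial eC 1
    rw [monomial_mul, hsplit, mul_one]
  rw [key]
  exact Submodule.smul_mem _ _ (Submodule.subset_span hEmem)

lemma exists_relation {C : Finset (Fin n)} {m : ℕ} (hm : C.card < m)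
    (f : Fin m → MvPolynomial (Fin n) K) :
    ∃ T : Finset ((Fin m → ℕ)), T.Nonempty ∧ ∃ b : (Fin m → ℕ) → MvPolynomial (Fin n) K,
      (∀ β ∈ T, b β ≠ 0 ∧ b β ∈ MvPolynomial.supported K ((↑C : Set (Fin n))ᶜ)) ∧
      ∑ β ∈ T, b β * ∏ i, f i ^ β i = 0 := by
  classical
  set B := MvPolynomial.supported K ((↑C : Set (Fin n))ᶜ) with hB
  set c := C.card with hc
  set d := Finset.univ.sup (fun i => (f i).totalDegree) with hd
  set N := (m * d + 1) ^ m with hN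
  set D := m * N * d with hD
  have hN1 : 1 ≤ N := Nat.one_le_pow _ _ (by omega)
  set v : (Fin m → Fin (N + 1)) → MvPolynomial (Fin n) K :=
    fun β => ∏ i, f i ^ (β i : ℕ) with hv
  have hdeg : ∀ β, (v β).totalDegree ≤ D := by
    intro β
    refine (totalDegree_finset_prod _ _).trans ?_
    have : ∀ i ∈ Finset.univ, (f i ^ (β i : ℕ)).totalDegree ≤ N * d := by
      intro i _
      refine (totalDegree_pow _ _).trans ?_
      have h1 : (β i : ℕ) ≤ N := Nat.lt_succ_iff.1 (β i).isLt
      have h2 : (f i).totalDegree ≤ d := by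
        rw [hd]; exact Finset.le_sup (f := fun i => (f i).totalDegree) (Finset.mem_univ i)
      exact Nat.mul_le_mul h1 h2
    refine (Finset.sum_le_sum this).trans ?_
    rw [Finset.sum_const, Finset.card_univ, Fintype.card_fin, smul_eq_mul, hD]
    rw [mul_assoc]
  have hnotli : ¬ LinearIndependent B v := by
    intro hli
    have hcard := linearIndependent_le_span' v hli
      ((ECD K C D : Finset (MvPolynomial (Fin n) K)) : Set (MvPolynomial (Fin n) K))
      (by
        rintro x ⟨β, rfl⟩
        exact mem_span_ECD (hdeg β))
    rw [Cardinal.mk_fintype, Fintype.card_fun, Fintype.card_fin, Fintype.card_fin] at hcard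
    have hcard2 : (N + 1) ^ m ≤ Fintype.card ↑((ECD K C D : Finset (MvPolynomial (Fin n) K))
        : Set (MvPolynomial (Fin n) K)) := by exact_mod_cast hcard
    have ecard : Fintype.card ↑((ECD K C D : Finset (MvPolynomial (Fin n) K))
        : Set (MvPolynomial (Fin n) K)) = (ECD K C D).card := by
      simp
    rw [ecard] at hcard2
    have hcard3 : (N + 1) ^ m ≤ (D + 1) ^ c := hcard2.trans ECD_card
    -- arithmetic contradiction
    have harith : (D + 1) ^ c < (N + 1) ^ m := by
      have h1 : D + 1 ≤ N * (m * d + 1) := by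
        show m * N * d + 1 ≤ _
        calc m * N * d + 1 ≤ N * (m * d) + N := by nlinarith [hN1]
          _ = N * (m * d + 1) := by ring
      calc (D + 1) ^ c ≤ (N * (m * d + 1)) ^ c := Nat.pow_le_pow_left h1 c
        _ = N ^ c * (m * d + 1) ^ c := by rw [mul_pow]
        _ ≤ N ^ c * (m * d + 1) ^ m := by
            exact Nat.mul_le_mul_left _ (Nat.pow_le_pow_right (by omega) (le_of_lt hm))
        _ = N ^ c * N := by rw [← hN]
        _ = N ^ (c + 1) := by rw [pow_succ]
        _ ≤ N ^ m := Nat.pow_le_pow_right hN1 (by omega)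
        _ < (N + 1) ^ m := Nat.pow_lt_pow_left (by omega) (by omega)
    exact absurd hcard3 (not_le.2 harith)
  obtain ⟨g, hgsum, ⟨β0, hβ0⟩⟩ := Fintype.not_linearIndependent_iff.1 hnotli
  set coeβ : (Fin m → Fin (N + 1)) → (Fin m → ℕ) := fun β i => (β i : ℕ) with hcoeβ
  have hinj : Function.Injective coeβ := by
    intro β β' h
    funext i
    exact Fin.val_injective (congrFun h i)
  set T : Finset (Fin m → ℕ) :=
    (Finset.univ.filter (fun β => g β ≠ 0)).image coeβ with hT
  set b : (Fin m → ℕ) → MvPolynomial (Fin n) K := fun γ =>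
    if hh : ∀ i, γ i ≤ N then (g (fun i => ⟨γ i, Nat.lt_succ_of_le (hh i)⟩) : _) else 0 with hb
  have hbcoe : ∀ β : Fin m → Fin (N + 1), b (coeβ β) = ↑(g β) := by
    intro β
    have hh : ∀ i, coeβ β i ≤ N := fun i => Nat.lt_succ_iff.1 (β i).isLt
    simp only [hb]
    rw [dif_pos hh]
  refine ⟨T, ⟨coeβ β0, Finset.mem_image_of_mem _ (Finset.mem_filter.2 ⟨Finset.mem_univ _, hβ0⟩)⟩,
    b, ?_, ?_⟩
  · intro γ hγ
    rw [hT, Finset.mem_image] at hγ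
    obtain ⟨β, hβf, rfl⟩ := hγ
    rw [hbcoe β]
    have hgβ : g β ≠ 0 := (Finset.mem_filter.1 hβf).2
    constructor
    · intro hcon
      exact hgβ (by exact_mod_cast Subtype.ext hcon)
    · exact (g β).2
  · rw [hT, Finset.sum_image (fun β _ β' _ h => hinj h)]
    have : ∀ β ∈ Finset.univ.filter (fun β => g β ≠ 0),
        b (coeβ β) * ∏ i, f i ^ (coeβ β i) = g β • v β := by
      intro β _
      rw [hbcoe β, Subalgebra.smul_def, smul_eq_mul, hv]
    rw [Finset.sum_congr rfl this]
    rw [Finset.sum_filter_of_ne (by intro β _ hne; intro hcon; exact hne (by rw [hcon, zero_smul]))]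
    exact hgsum

end Aux5
noncomputable section Aux6

variable {K : Type} [Field K] {n : ℕ}

/-- The point of the prime spectrum corresponding to `PC K C`. -/
def PCpt (K : Type) [Field K] {n : ℕ} (C : Finset (Fin n)) :
    PrimeSpectrum (MvPolynomial (Fin n) K) :=
  ⟨PC K C, PC_isPrime C⟩

lemma height_PCpt_le (C : Finset (Fin n)) :
    Order.height (PCpt K C) ≤ (C.card : ℕ∞) := by
  rw [Order.height_le_iff]
  intro p hlast
  by_contra hlen
  push_neg at hlen
  have hlen' : C.card + 1 ≤ p.length := by exact_mod_cast hlen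
  set m := C.card + 1 with hm
  have hidx : ∀ i : Fin (m + 1), (i : ℕ) < p.length + 1 := fun i => by omega
  set q : Fin (m + 1) → Ideal (MvPolynomial (Fin n) K) :=
    fun i => (p.toFun ⟨(i : ℕ), hidx i⟩).asIdeal with hq
  have hprime : ∀ i, (q i).IsPrime := fun i => (p.toFun _).isPrime
  have hmono : ∀ j : Fin (p.length + 1), p.toFun j ≤ p.last := fun j =>
    p.monotone (Fin.le_last j)
  have hPC : ∀ i, q i ≤ PC K C := fun i =>
    le_trans (hmono _ : p.toFun _ ≤ p.last) (hlast : p.last.asIdeal ≤ PC K C)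
  have hstep : ∀ i : Fin m, q i.castSucc < q i.succ := by
    intro i
    have : (⟨((i.castSucc : Fin (m+1)) : ℕ), hidx _⟩ : Fin (p.length + 1)) <
        ⟨((i.succ : Fin (m+1)) : ℕ), hidx _⟩ := by
      simp only [Fin.mk_lt_mk, Fin.coe_castSucc, Fin.val_succ]
      omega
    exact p.strictMono this
  have hle : ∀ i : Fin m, q i.castSucc ≤ q i.succ := fun i => (hstep i).le
  have hchoice : ∀ i : Fin m, ∃ x, x ∈ q i.succ ∧ x ∉ q i.castSucc := by
    intro i
    obtain ⟨x, hx1, hx2⟩ := SetLike.exists_of_lt (hstep i)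
    exact ⟨x, hx1, hx2⟩
  choose f hf1 hf0 using hchoice
  obtain ⟨T, hTne, b, hprops, hrel⟩ := exists_relation (C := C) (m := m) (by omega) f
  obtain ⟨β, hβT, hβlast⟩ := chain_relation m q hprime hle f hf1 hf0 T hTne b
    (by rw [hrel]; exact Submodule.zero_mem _)
  obtain ⟨hbne, hbsupp⟩ := hprops β hβT
  exact hbne (supported_PC_eq_zero hbsupp (hPC _ hβlast))

lemma height_PCpt_ge (C : Finset (Fin n)) :
    (C.card : ℕ∞) ≤ Order.height (PCpt K C) := by
  classical
  set g := C.orderEmbOfFin rfl with hg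
  set Csub : Fin (C.card + 1) → Finset (Fin n) :=
    fun j => (Finset.univ.filter (fun t : Fin C.card => (t : ℕ) < (j : ℕ))).image g with hCsub
  have mem_Csub : ∀ (j) (w : Fin n), w ∈ Csub j ↔ ∃ t : Fin C.card, (t : ℕ) < (j : ℕ) ∧ g t = w := by
    intro j w
    simp [hCsub]
  have hlt : ∀ j j' : Fin (C.card + 1), j < j' → PC K (Csub j) < PC K (Csub j') := by
    intro j j' hjj'
    have hsub : Csub j ⊆ Csub j' := by
      intro w hw
      rw [mem_Csub] at hw ⊢
      obtain ⟨t, ht, rfl⟩ := hw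
      exact ⟨t, lt_of_lt_of_le ht (le_of_lt hjj'), rfl⟩
    have hjC : (j : ℕ) < C.card := by
      have := hjj'
      have h2 := j'.isLt
      omega
    refine lt_of_le_of_ne (PC_mono hsub) ?_
    intro heq
    have hmem : X (g ⟨(j : ℕ), hjC⟩) ∈ PC K (Csub j') := by
      rw [X_mem_PC, mem_Csub]
      exact ⟨⟨(j : ℕ), hjC⟩, hjj', rfl⟩
    rw [← heq, X_mem_PC, mem_Csub] at hmem
    obtain ⟨t, ht, hteq⟩ := hmem
    have : t = ⟨(j : ℕ), hjC⟩ := g.injective hteq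
    rw [this] at ht
    exact lt_irrefl _ ht
  set series : LTSeries (PrimeSpectrum (MvPolynomial (Fin n) K)) :=
    ⟨C.card, fun j => ⟨PC K (Csub j), PC_isPrime _⟩, by
      intro i
      exact (hlt i.castSucc i.succ (Fin.castSucc_lt_succ : i.castSucc < i.succ)
        : (⟨PC K (Csub i.castSucc), _⟩ : PrimeSpectrum _) < ⟨PC K (Csub i.succ), _⟩)⟩ with hser
  have hlast : series.last = PCpt K C := by
    have hCl : Csub (Fin.last C.card) = C := by
      ext w
      rw [mem_Csub]
      constructor
      · rintro ⟨t, _, rfl⟩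
        exact C.orderEmbOfFin_mem rfl t
      · intro hw
        have : w ∈ Set.range ⇑g := by
          rw [hg, Finset.range_orderEmbOfFin]
          exact hw
        obtain ⟨t, rfl⟩ := this
        exact ⟨t, t.isLt, rfl⟩
    show (⟨PC K (Csub (Fin.last C.card)), _⟩ : PrimeSpectrum _) = PCpt K C
    rw [PCpt]
    congr 1
    rw [hCl]
  have := Order.length_le_height (le_of_eq hlast)
  simpa using this

lemma height_PCpt (C : Finset (Fin n)) : Order.height (PCpt K C) = (C.card : ℕ∞) :=
  le_antisymm (height_PCpt_le C) (height_PCpt_ge C)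

end Aux6
noncomputable section Aux7

variable {K : Type} [Field K] {n : ℕ}

lemma sqm_mem_PC_iff {C A : Finset (Fin n)} :
    sqm K A ∈ PC K C ↔ (A ∩ C).Nonempty := by
  have := sqm_mem_PC_pow_iff (K := K) (C := C) (A := A) (s := 1)
  rw [pow_one] at this
  rw [this, ← Finset.card_pos]
  omega

open Classical in
/-- The set of variables belonging to an ideal. -/
def Cof {K : Type} [Field K] {n : ℕ} (p : Ideal (MvPolynomial (Fin n) K)) : Finset (Fin n) :=
  Finset.univ.filter (fun v => X v ∈ p)

lemma mem_Cof {p : Ideal (MvPolynomial (Fin n) K)} {v : Fin n} :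
    v ∈ Cof p ↔ X v ∈ p := by
  simp [Cof]

variable {I : Ideal (MvPolynomial (Fin n) K)} {𝒜 : Set (Finset (Fin n))}
  (hI : I = Ideal.span ((fun A => ∏ v ∈ A, (X v : MvPolynomial (Fin n) K)) '' 𝒜))

include hI

lemma I_le_PC_iff {C : Finset (Fin n)} :
    I ≤ PC K C ↔ ∀ A ∈ 𝒜, (A ∩ C).Nonempty := by
  rw [hI, Ideal.span_le]
  constructor
  · intro h A hA
    have : sqm K A ∈ PC K C := h ⟨A, hA, rfl⟩
    exact sqm_mem_PC_iff.1 this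
  · rintro h x ⟨A, hA, rfl⟩
    exact sqm_mem_PC_iff.2 (h A hA)

lemma minimal_eq_PC {p : Ideal (MvPolynomial (Fin n) K)} (hp : p ∈ I.minimalPrimes) :
    p = PC K (Cof p) := by
  obtain ⟨⟨hprime, hIp⟩, hmin⟩ := hp
  have h1 : PC K (Cof p) ≤ p := by
    rw [PC, Ideal.span_le]
    rintro x ⟨v, hv, rfl⟩
    exact mem_Cof.1 (Finset.mem_coe.1 hv)
  have h2 : I ≤ PC K (Cof p) := by
    rw [I_le_PC_iff hI]
    intro A hA
    have hmem : sqm K A ∈ p := hIp (by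
      rw [hI]
      exact Ideal.subset_span ⟨A, hA, rfl⟩)
    rw [sqm] at hmem
    have := hprime
    obtain ⟨v, hvA, hvp⟩ := (Ideal.IsPrime.prod_mem_iff).1 hmem
    exact ⟨v, Finset.mem_inter.2 ⟨hvA, mem_Cof.2 hvp⟩⟩
  have h3 : p ≤ PC K (Cof p) := hmin ⟨PC_isPrime _, h2⟩ h1
  exact le_antisymm h3 h1

lemma mem_I_of_mem_minimal {f : MvPolynomial (Fin n) K}
    (hf : ∀ p ∈ I.minimalPrimes, f ∈ p) : f ∈ I := by
  classical
  by_contra hfI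
  have hfun : (fun A : Finset (Fin n) => ∏ v ∈ A, (X v : MvPolynomial (Fin n) K)) =
      fun A => monomial (expA A) 1 := funext fun A => sqm_eq_monomial A
  have hform : I = Ideal.span ((fun e => (monomial e (1:K))) '' (expA '' 𝒜)) := by
    rw [hI, hfun, Set.image_image]
  rw [hform, mem_ideal_span_monomial_image] at hfI
  push_neg at hfI
  obtain ⟨e, he, hnd⟩ := hfI
  set C : Finset (Fin n) := Finset.univ.filter (fun v => e v = 0) with hC
  have hIC : I ≤ PC K C := by
    rw [I_le_PC_iff hI]
    intro A hA
    by_contra hempty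
    rw [Finset.not_nonempty_iff_eq_empty] at hempty
    refine hnd (expA A) ⟨A, hA, rfl⟩ ?_
    rw [Finsupp.le_def]
    intro v
    rw [expA_apply]
    by_cases hv : v ∈ A
    · rw [if_pos hv]
      have hvC : v ∉ C := fun hvc => by
        have : v ∈ A ∩ C := Finset.mem_inter.2 ⟨hv, hvc⟩
        rw [hempty] at this
        exact absurd this (Finset.notMem_empty v)
      rw [hC, Finset.mem_filter] at hvC
      have : ¬ e v = 0 := fun h0 => hvC ⟨Finset.mem_univ v, h0⟩
      omega
    · rw [if_neg hv]
      omega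
  obtain ⟨p, hpmin, hple⟩ := Ideal.exists_minimalPrimes_le (J := PC K C) hIC
  have : f ∈ PC K C := hple (hf p hpmin)
  obtain ⟨v, hvC, hev⟩ := mem_PC.1 this e he
  rw [hC, Finset.mem_filter] at hvC
  exact hev hvC.2

lemma sqm_mem_symbPow_iff {A : Finset (Fin n)} {s : ℕ} (hs : 1 ≤ s) :
    (sqm K A ∈ (if (s:ℤ) ≤ 0 then (⊤ : Ideal (MvPolynomial (Fin n) K))
      else ⨅ p ∈ I.minimalPrimes, p ^ (s:ℤ).toNat)) ↔
    ∀ p ∈ I.minimalPrimes, s ≤ (A ∩ Cof p).card := by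
  rw [if_neg (by omega)]
  have htn : ((s:ℤ)).toNat = s := by omega
  rw [htn]
  simp only [Ideal.mem_iInf]
  constructor
  · intro h p hp
    have h2 := h p hp
    rw [minimal_eq_PC hI hp] at h2
    exact sqm_mem_PC_pow_iff.1 h2
  · intro h p hp
    rw [minimal_eq_PC hI hp]
    exact sqm_mem_PC_pow (h p hp)

end Aux7

lemma hu_prod {K : Type} [Field K] {n : ℕ} {U A : Finset (Fin n)} (h : U ⊆ A) :
    (∏ v ∈ A, (X v : MvPolynomial (Fin n) K)) = sqm K (A \ U) * sqm K U := by
  rw [sqm, sqm, Finset.prod_sdiff h]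


noncomputable section Glue

variable {K : Type} [Field K] {n : ℕ}
variable {I : Ideal (MvPolynomial (Fin n) K)} {𝒜 : Set (Finset (Fin n))}
  (hI : I = Ideal.span ((fun A => ∏ v ∈ A, (X v : MvPolynomial (Fin n) K)) '' 𝒜))

lemma symbPow_eq (s : ℕ) : symbPow K n I (s : ℤ) =
    (if (s:ℤ) ≤ 0 then (⊤ : Ideal (MvPolynomial (Fin n) K))
      else ⨅ p ∈ I.minimalPrimes, p ^ ((s:ℤ)).toNat) := rfl

include hI

lemma ssp_ne_bot_iff {s : ℕ} (hs : 1 ≤ s) :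
    ssp K n I (s : ℤ) ≠ ⊥ ↔
      ∃ A : Finset (Fin n), ∀ p ∈ I.minimalPrimes, s ≤ (A ∩ Cof p).card := by
  rw [ssp, sqfreePart, Ne, Ideal.span_eq_bot]
  push_neg
  constructor
  · rintro ⟨x, ⟨hxJ, A, rfl⟩, -⟩
    refine ⟨A, ?_⟩
    rw [symbPow_eq] at hxJ
    exact (sqm_mem_symbPow_iff hI hs).1 hxJ
  · rintro ⟨A, hA⟩
    refine ⟨sqm K A, ⟨?_, A, rfl⟩, sqm_ne_zero A⟩
    rw [symbPow_eq]
    exact (sqm_mem_symbPow_iff hI hs).2 hA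

lemma heightI_pt_eq {p : Ideal (MvPolynomial (Fin n) K)} (hp : p ∈ I.minimalPrimes)
    (hpr : p.IsPrime) :
    Order.height (⟨p, hpr⟩ : PrimeSpectrum (MvPolynomial (Fin n) K)) = ((Cof p).card : ℕ∞) := by
  have hpt : (⟨p, hpr⟩ : PrimeSpectrum (MvPolynomial (Fin n) K)) = PCpt K (Cof p) := by
    apply PrimeSpectrum.ext
    exact minimal_eq_PC hI hp
  rw [hpt, height_PCpt]

lemma le_heightI_iff (s : ℕ) :
    (s : ℕ∞) ≤ heightI K n I ↔ ∀ p ∈ I.minimalPrimes, s ≤ (Cof p).card := by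
  rw [heightI, le_iInf_iff]
  constructor
  · intro hh p hp
    have := hh ⟨p, hp⟩
    rw [heightI_pt_eq hI hp] at this
    exact_mod_cast this
  · rintro hh ⟨p, hp⟩
    rw [heightI_pt_eq hI hp]
    exact_mod_cast hh p hp

lemma part_one {s : ℕ} (hs : 1 ≤ s) :
    ssp K n I (s : ℤ) ≠ ⊥ ↔ (s : ℕ∞) ≤ heightI K n I := by
  rw [ssp_ne_bot_iff hI hs, le_heightI_iff hI]
  constructor
  · rintro ⟨A, hA⟩ p hp
    exact (hA p hp).trans (Finset.card_le_card Finset.inter_subset_right)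
  · intro hh
    refine ⟨Finset.univ, fun p hp => ?_⟩
    rw [Finset.univ_inter]
    exact hh p hp

open Classical in
/-- The union of the supports of the minimal primes. -/
def Uof (K : Type) [Field K] {n : ℕ} (I : Ideal (MvPolynomial (Fin n) K)) : Finset (Fin n) :=
  Finset.univ.filter (fun v => ∃ q ∈ I.minimalPrimes, X v ∈ q)

omit hI in
lemma mem_Uof {v : Fin n} : v ∈ Uof K I ↔ ∃ q ∈ I.minimalPrimes, X v ∈ q := by
  simp [Uof]

lemma Cof_subset_Uof {p : Ideal (MvPolynomial (Fin n) K)} (hp : p ∈ I.minimalPrimes) :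
    Cof p ⊆ Uof K I := fun v hv => mem_Uof.2 ⟨p, hp, mem_Cof.1 hv⟩

lemma assoc_of_minimal {p : Ideal (MvPolynomial (Fin n) K)} (hp : p ∈ I.minimalPrimes) :
    IsAssociatedPrime p (MvPolynomial (Fin n) K ⧸ I) := by
  classical
  have hpr : p.IsPrime := hp.1.1
  have hpp := minimal_eq_PC hI hp
  set u := sqm K (Uof K I \ Cof p) with hu
  have hunotp : u ∉ p := by
    rw [hpp, hu, sqm_mem_PC_iff]
    rintro ⟨v, hv⟩
    rw [Finset.mem_inter, Finset.mem_sdiff] at hv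
    exact hv.1.2 hv.2
  have huq : ∀ q ∈ I.minimalPrimes, q ≠ p → u ∈ q := by
    intro q hq hqp
    have hqq := minimal_eq_PC hI hq
    rw [hqq, hu, sqm_mem_PC_iff]
    have hnsub : ¬ Cof q ⊆ Cof p := by
      intro hsub
      have hle : q ≤ p := by
        rw [hqq, hpp]
        exact PC_mono hsub
      have := hp.2 ⟨hq.1.1, hq.1.2⟩ hle
      exact hqp (le_antisymm hle this)
    obtain ⟨v, hvq, hvp⟩ := Finset.not_subset.1 hnsub
    refine ⟨v, Finset.mem_inter.2 ⟨Finset.mem_sdiff.2 ⟨?_, hvp⟩, hvq⟩⟩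
    exact mem_Uof.2 ⟨q, hq, mem_Cof.1 hvq⟩
  refine ⟨hpr, Ideal.Quotient.mk I u, ?_⟩
  suffices hann : p = (⊥ : Submodule _ _).colon {Ideal.Quotient.mk I u} by rw [← hann, hpr.radical]
  ext r
  rw [Submodule.mem_colon_singleton, Submodule.mem_bot]
  have hsmul : r • Ideal.Quotient.mk I u = Ideal.Quotient.mk I (r * u) :=
    Eq.symm (Ideal.Quotient.mk_eq_mk_iff_sub_mem (r * u) (r • u) |>.mpr (by simp))
  rw [hsmul, Ideal.Quotient.eq_zero_iff_mem]
  constructor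
  · intro hr
    apply mem_I_of_mem_minimal hI
    intro q hq
    by_cases hqp : q = p
    · subst hqp
      exact Ideal.mul_mem_right u _ hr
    · exact Ideal.mul_mem_left _ _ (huq q hq hqp)
  · intro hru
    have : r * u ∈ p := hp.1.2 hru
    rcases hpr.mem_or_mem this with h | h
    · exact h
    · exact absurd h hunotp

lemma sqm_mem_symbPow_card {A : Finset (Fin n)} {h : ℕ}
    (hcard : ∀ p ∈ I.minimalPrimes, (Cof p).card = h) :
    sqm K A ∈ symbPow K n I (h : ℤ) ↔ ∀ p ∈ I.minimalPrimes, Cof p ⊆ A := by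
  by_cases h0 : h = 0
  · subst h0
    rw [symbPow_eq, if_pos (by omega)]
    constructor
    · intro _ p hp
      have : (Cof p).card = 0 := hcard p hp
      rw [Finset.card_eq_zero] at this
      rw [this]
      exact Finset.empty_subset A
    · intro _
      exact Submodule.mem_top
  · rw [symbPow_eq, sqm_mem_symbPow_iff hI (by omega)]
    constructor
    · intro hh p hp
      have h1 := hh p hp
      rw [← hcard p hp] at h1
      have h2 : A ∩ Cof p = Cof p :=
        Finset.eq_of_subset_of_card_le Finset.inter_subset_right h1
      rw [← Finset.inter_eq_right]
      exact h2
    · intro hh p hp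
      rw [← hcard p hp]
      rw [Finset.inter_eq_right.2 (hh p hp)]

lemma part_two
    (hunmix : ∀ p q : Ideal (MvPolynomial (Fin n) K),
        ∀ hp : IsAssociatedPrime p (MvPolynomial (Fin n) K ⧸ I),
        ∀ hq : IsAssociatedPrime q (MvPolynomial (Fin n) K ⧸ I),
        Order.height (⟨p, hp.1⟩ : PrimeSpectrum (MvPolynomial (Fin n) K)) =
          Order.height (⟨q, hq.1⟩ : PrimeSpectrum (MvPolynomial (Fin n) K)))
    (h : ℕ) (hh : heightI K n I = (h : ℕ∞)) :
    Submodule.IsPrincipal (ssp K n I (h : ℤ)) := by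
  classical
  rcases Set.eq_empty_or_nonempty I.minimalPrimes with hempty | ⟨p0, hp0⟩
  · exfalso
    have : IsEmpty I.minimalPrimes := by
      rw [hempty]
      exact Set.isEmpty_coe_sort.mpr rfl
    rw [heightI, iInf_of_empty] at hh
    exact (ENat.coe_ne_top h) hh.symm
  · have hcardeq : ∀ p ∈ I.minimalPrimes, (Cof p).card = (Cof p0).card := by
      intro p hp
      have ha1 := assoc_of_minimal hI hp
      have ha2 := assoc_of_minimal hI hp0
      have := hunmix p p0 ha1 ha2
      rw [heightI_pt_eq hI hp, heightI_pt_eq hI hp0] at this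
      exact Nat.cast_inj.mp this
    have hhI : heightI K n I = ((Cof p0).card : ℕ∞) := by
      rw [heightI]
      have hcongr : ∀ p : I.minimalPrimes,
          Order.height (⟨p.1, p.2.1.1⟩ : PrimeSpectrum (MvPolynomial (Fin n) K)) =
            ((Cof p0).card : ℕ∞) := by
        rintro ⟨p, hp⟩
        rw [heightI_pt_eq hI hp, hcardeq p hp]
      rw [iInf_congr hcongr]
      have : Nonempty I.minimalPrimes := ⟨⟨p0, hp0⟩⟩
      exact iInf_const
    have hcard : ∀ p ∈ I.minimalPrimes, (Cof p).card = h := by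
      intro p hp
      rw [hcardeq p hp]
      have : ((Cof p0).card : ℕ∞) = (h : ℕ∞) := by rw [← hhI, hh]
      exact_mod_cast this
    have heq : ssp K n I (h : ℤ) = Ideal.span {sqm K (Uof K I)} := by
      rw [ssp, sqfreePart]
      apply le_antisymm
      · rw [Ideal.span_le]
        rintro x ⟨hxJ, A, rfl⟩
        have hUA : Uof K I ⊆ A := by
          intro v hv
          obtain ⟨q, hq, hXv⟩ := mem_Uof.1 hv
          have := (sqm_mem_symbPow_card hI hcard).1 hxJ q hq
          exact this (mem_Cof.2 hXv)
        rw [SetLike.mem_coe, Ideal.mem_span_singleton]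
        exact ⟨sqm K (A \ Uof K I), by rw [mul_comm, hu_prod hUA]⟩
      · rw [Ideal.span_le, Set.singleton_subset_iff, SetLike.mem_coe]
        refine Ideal.subset_span ⟨?_, Uof K I, by rw [sqm]⟩
        exact (sqm_mem_symbPow_card hI hcard).2 (fun p hp => Cof_subset_Uof hI hp)
    exact ⟨⟨sqm K (Uof K I), by rw [heq, Ideal.submodule_span_eq]⟩⟩

end Glue

/-- For a squarefree monomial ideal `I` and `s ≥ 1`, the squarefree part
`I^{s}` of the `s`-th symbolic power is nonzero iff `s ≤ ht I`; moreover if `I` is unmixed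
(all associated primes of `S/I` have the same height), then `I^{ht I}` is principal. -/
theorem squarefree_symbolic_power_ne_zero_iff_and_unmixed_principal
    (K : Type) [Field K] (n : ℕ) (I : Ideal (MvPolynomial (Fin n) K))
    (𝒜 : Set (Finset (Fin n)))
    (hI : I = Ideal.span ((fun A => ∏ v ∈ A, (X v : MvPolynomial (Fin n) K)) '' 𝒜))
    (s : ℕ) (hs : 1 ≤ s) :
    (ssp K n I (s : ℤ) ≠ ⊥ ↔ (s : ℕ∞) ≤ heightI K n I) ∧
    ((∀ p q : Ideal (MvPolynomial (Fin n) K),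
        ∀ hp : IsAssociatedPrime p (MvPolynomial (Fin n) K ⧸ I),
        ∀ hq : IsAssociatedPrime q (MvPolynomial (Fin n) K ⧸ I),
        Order.height (⟨p, hp.1⟩ : PrimeSpectrum (MvPolynomial (Fin n) K)) =
          Order.height (⟨q, hq.1⟩ : PrimeSpectrum (MvPolynomial (Fin n) K))) →
      ∀ h : ℕ, heightI K n I = (h : ℕ∞) →
        Submodule.IsPrincipal (ssp K n I (h : ℤ))) := by
  exact ⟨part_one hI hs, fun hunmix h hh => part_two hI hunmix h hh⟩
end

section
/- Let G be a finite simple graph and let e = x_i x_j be an edge of G. Then (I(G)^{2} : x_i x_j) = I(G − {x_i, x_j}) + ( x_p x_q : x_p ∈ N_{G−x_j}(x_i), x_q ∈ N_{G−x_i}(x_j), x_p ≠ x_q ) + ( x_t : x_t ∈ N_G(x_i) ∩ N_G(x_j) ), where G − U denotes the graph obtained by deleting the vertices in U and all edges meeting U. -/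
open MvPolynomial

namespace SspAux

open MvPolynomial Finsupp

variable {K : Type} [Field K] {n : ℕ}

noncomputable section

/-- The 0/1 indicator finsupp of a finset. -/
def indic (A : Finset (Fin n)) : Fin n →₀ ℕ :=
  ⟨A, fun v => if v ∈ A then 1 else 0, fun v => by simp⟩

@[simp] lemma indic_apply (A : Finset (Fin n)) (v : Fin n) :
    indic A v = if v ∈ A then 1 else 0 := rfl

@[simp] lemma indic_support (A : Finset (Fin n)) : (indic A).support = A := rfl

lemma X_eq (v : Fin n) : (X v : MvPolynomial (Fin n) K) = monomial (single v 1) 1 :=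
  (pow_one (X v : MvPolynomial (Fin n) K)).symm.trans (X_pow_eq_monomial)

lemma X_mul_X (v w : Fin n) :
    (X v : MvPolynomial (Fin n) K) * X w = monomial (single v 1 + single w 1) 1 := by
  rw [X_eq, X_eq, monomial_mul, one_mul]

lemma prod_X_indic (A : Finset (Fin n)) :
    (∏ v ∈ A, (X v : MvPolynomial (Fin n) K)) = monomial (indic A) 1 := by
  classical
  rw [monomial_eq, C_1, one_mul, Finsupp.prod, indic_support]
  exact (Finset.prod_congr rfl fun v hv => by
    rw [indic_apply, if_pos hv, pow_one]).symm

open scoped Classical in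
/-- The algebra map sending the variables in `C` to `0`. -/
def killC (C : Set (Fin n)) : MvPolynomial (Fin n) K →ₐ[K] MvPolynomial (Fin n) K :=
  aeval (fun v => if v ∈ C then 0 else X v)

open scoped Classical in
lemma killC_monomial (C : Set (Fin n)) (d : Fin n →₀ ℕ) (c : K) :
    killC (K := K) C (monomial d c) =
      if ∀ i ∈ C, d i = 0 then monomial d c else 0 := by
  classical
  rw [killC, aeval_monomial]
  split_ifs with h
  · rw [monomial_eq, algebraMap_eq]
    congr 1
    apply Finsupp.prod_congr
    intro i hi
    rw [if_neg fun hiC => (Finsupp.mem_support_iff.1 hi) (h i hiC)]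
  · push_neg at h
    obtain ⟨i, hiC, hi0⟩ := h
    refine mul_eq_zero_of_right _ ?_
    rw [Finsupp.prod]
    apply Finset.prod_eq_zero (Finsupp.mem_support_iff.2 hi0)
    rw [if_pos hiC, zero_pow hi0]

lemma span_X_eq_ker (C : Set (Fin n)) :
    Ideal.span (X '' C : Set (MvPolynomial (Fin n) K)) =
      RingHom.ker (killC (K := K) C).toRingHom := by
  classical
  apply le_antisymm
  · rw [Ideal.span_le]
    rintro m ⟨v, hv, rfl⟩
    have : killC (K := K) C (X v) = 0 := by
      rw [killC, aeval_X, if_pos hv]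
    simpa [RingHom.mem_ker] using this
  · intro f hf
    rw [mem_ideal_span_X_image]
    by_contra hcon
    push_neg at hcon
    obtain ⟨m, hm, hm0⟩ := hcon
    have hker : killC (K := K) C f = 0 := hf
    have hco : coeff m (killC (K := K) C f) = coeff m f := by
      conv_lhs => rw [f.as_sum]
      rw [map_sum, coeff_sum]
      refine Finset.sum_eq_single_of_mem m hm ?_ |>.trans ?_
      · intro d _ hdm
        rw [killC_monomial]
        split_ifs with h
        · rw [coeff_monomial, if_neg hdm]
        · rw [coeff_zero]
      · rw [killC_monomial, if_pos hm0, coeff_monomial, if_pos rfl]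
    rw [hker, coeff_zero] at hco
    exact (Finsupp.mem_support_iff.1 hm) hco.symm

lemma span_X_isPrime (C : Set (Fin n)) :
    (Ideal.span (X '' C : Set (MvPolynomial (Fin n) K))).IsPrime := by
  rw [span_X_eq_ker]
  exact RingHom.ker_isPrime _

/-- Independence of a finset of vertices. -/
def Indep (G : SimpleGraph (Fin n)) (T : Finset (Fin n)) : Prop :=
  ∀ v ∈ T, ∀ w ∈ T, ¬ G.Adj v w

lemma exists_maximal_indep (G : SimpleGraph (Fin n)) (S : Finset (Fin n)) (hS : Indep G S) :
    ∃ T, S ⊆ T ∧ Indep G T ∧ ∀ v ∉ T, ∃ w ∈ T, G.Adj v w := by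
  classical
  obtain ⟨T, hT, hmaxT⟩ := Finset.exists_max_image
    (Finset.univ.filter fun T : Finset (Fin n) => S ⊆ T ∧ Indep G T) Finset.card
    ⟨S, by simp [hS]⟩
  rw [Finset.mem_filter] at hT
  refine ⟨T, hT.2.1, hT.2.2, ?_⟩
  intro v hv
  by_contra hcon
  push_neg at hcon
  have hins : Indep G (insert v T) := by
    intro a ha b hb hab
    rcases Finset.mem_insert.1 ha with hav | hav <;> rcases Finset.mem_insert.1 hb with hbv | hbv
    · rw [hav, hbv] at hab; exact G.loopless.1 v hab
    · rw [hav] at hab; exact hcon b hbv hab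
    · rw [hbv] at hab; exact hcon a hav hab.symm
    · exact hT.2.2 a hav b hbv hab
  have hcard := hmaxT (insert v T)
    (Finset.mem_filter.2 ⟨Finset.mem_univ _,
      hT.2.1.trans (Finset.subset_insert _ _), hins⟩)
  rw [Finset.card_insert_of_notMem hv] at hcard
  omega

lemma maxIndep_minimalPrime (G : SimpleGraph (Fin n)) (T : Finset (Fin n))
    (hT : Indep G T) (hmax : ∀ v ∉ T, ∃ w ∈ T, G.Adj v w) :
    Ideal.span (X '' {w | w ∉ T} : Set (MvPolynomial (Fin n) K)) ∈
      (edgeIdeal K n G).minimalPrimes := by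
  classical
  constructor
  · refine ⟨span_X_isPrime _, ?_⟩
    rw [edgeIdeal, Ideal.span_le]
    rintro m ⟨v, w, hvw, rfl⟩
    by_cases hv : v ∈ T
    · have hw : w ∉ T := fun hw => hT v hv w hw hvw
      exact Ideal.mul_mem_left _ _ (Ideal.subset_span ⟨w, hw, rfl⟩)
    · exact Ideal.mul_mem_right _ _ (Ideal.subset_span ⟨v, hv, rfl⟩)
  · rintro q ⟨hq, hIq⟩ hqle
    rw [Ideal.span_le]
    rintro m ⟨v, hv, rfl⟩
    obtain ⟨w, hwT, hvw⟩ := hmax v hv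
    have hedge : (X v : MvPolynomial (Fin n) K) * X w ∈ q :=
      hIq (Ideal.subset_span ⟨v, w, hvw, rfl⟩)
    rcases hq.mem_or_mem hedge with h | h
    · exact h
    · exfalso
      have hmem := hqle h
      rw [mem_ideal_span_X_image] at hmem
      obtain ⟨i, hiC, hi⟩ := hmem (single w 1)
        (by rw [support_X]; exact Finset.mem_singleton_self _)
      have : i = w := by
        by_contra hne
        exact hi (Finsupp.single_eq_of_ne' fun h => hne h.symm)
      exact hiC (this ▸ hwT)

lemma mem_sq_span_X (C : Set (Fin n)) (A : Finset (Fin n))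
    (h : monomial (indic A) (1 : K) ∈
      (Ideal.span (X '' C : Set (MvPolynomial (Fin n) K))) ^ 2) :
    ∃ u w, u ≠ w ∧ u ∈ C ∧ w ∈ C ∧ u ∈ A ∧ w ∈ A := by
  classical
  have hle : (Ideal.span (X '' C : Set (MvPolynomial (Fin n) K))) ^ 2 ≤
      Ideal.span ((fun d => monomial d (1 : K)) ''
        {d | ∃ u ∈ C, ∃ w ∈ C, d = single u 1 + single w 1}) := by
    rw [pow_two, Ideal.span_mul_span, Ideal.span_le]
    intro x hx
    simp only [Set.mem_mul, Set.mem_iUnion, Set.mem_image, Set.mem_singleton_iff] at hx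
    obtain ⟨a, ⟨u, hu, rfl⟩, b, ⟨w, hw, rfl⟩, rfl⟩ := hx
    exact Ideal.subset_span ⟨single u 1 + single w 1, ⟨u, hu, w, hw, rfl⟩,
      (X_mul_X u w).symm⟩
  have hmem := mem_ideal_span_monomial_image.1 (hle h) (indic A)
    (by rw [support_monomial, if_neg one_ne_zero]; exact Finset.mem_singleton_self _)
  obtain ⟨d, ⟨u, hu, w, hw, rfl⟩, hdle⟩ := hmem
  have hvu := Finsupp.le_def.1 hdle u
  have hvw := Finsupp.le_def.1 hdle w
  have hne : u ≠ w := by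
    rintro rfl
    rw [Finsupp.add_apply, Finsupp.single_eq_same, indic_apply] at hvu
    split_ifs at hvu <;> omega
  rw [Finsupp.add_apply, Finsupp.single_eq_same,
    Finsupp.single_eq_of_ne' (fun h => hne h.symm), indic_apply] at hvu
  rw [Finsupp.add_apply, Finsupp.single_eq_same, Finsupp.single_eq_of_ne' hne,
    indic_apply] at hvw
  refine ⟨u, w, hne, hu, hw, ?_, ?_⟩
  · by_contra h'; rw [if_neg h'] at hvu; omega
  · by_contra h'; rw [if_neg h'] at hvw; omega

lemma mem_symbPow_two (G : SimpleGraph (Fin n)) {x : MvPolynomial (Fin n) K}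
    (h : ∀ p : Ideal (MvPolynomial (Fin n) K), p.IsPrime → edgeIdeal K n G ≤ p → x ∈ p ^ 2) :
    x ∈ symbPow K n (edgeIdeal K n G) 2 := by
  rw [symbPow, if_neg (by norm_num)]
  rw [Ideal.mem_iInf]
  intro p
  rw [Ideal.mem_iInf]
  intro hp
  exact h p hp.1.1 hp.1.2

lemma symbPow_two_mem (G : SimpleGraph (Fin n)) {x : MvPolynomial (Fin n) K}
    (h : x ∈ symbPow K n (edgeIdeal K n G) 2) {p : Ideal (MvPolynomial (Fin n) K)}
    (hp : p ∈ (edgeIdeal K n G).minimalPrimes) : x ∈ p ^ 2 := by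
  rw [symbPow, if_neg (by norm_num), Ideal.mem_iInf] at h
  exact Ideal.mem_iInf.1 (h p) hp

lemma edge_avoiding (G : SimpleGraph (Fin n)) (A : Finset (Fin n))
    (hA : monomial (indic A) (1 : K) ∈ symbPow K n (edgeIdeal K n G) 2) (v : Fin n) :
    ∃ a b, a ∈ A ∧ b ∈ A ∧ a ≠ v ∧ b ≠ v ∧ G.Adj a b := by
  classical
  by_contra hcon
  push_neg at hcon
  have hindep : Indep G (A.erase v) := fun a ha b hb =>
    hcon a b (Finset.mem_of_mem_erase ha) (Finset.mem_of_mem_erase hb)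
      (Finset.ne_of_mem_erase ha) (Finset.ne_of_mem_erase hb)
  obtain ⟨T, hsub, hTind, hTmax⟩ := exists_maximal_indep G _ hindep
  have hp := maxIndep_minimalPrime (K := K) G T hTind hTmax
  have hmem : monomial (indic A) (1 : K) ∈
      (Ideal.span (X '' {w | w ∉ T} : Set (MvPolynomial (Fin n) K))) ^ 2 :=
    symbPow_two_mem G hA hp
  obtain ⟨u, w, hne, huC, hwC, huA, hwA⟩ := mem_sq_span_X _ _ hmem
  have hu : u = v := by
    by_contra h'
    exact huC (hsub (Finset.mem_erase.2 ⟨h', huA⟩))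
  have hw : w = v := by
    by_contra h'
    exact hwC (hsub (Finset.mem_erase.2 ⟨h', hwA⟩))
  exact hne (hu.trans hw.symm)

lemma pair_le (e : Fin n →₀ ℕ) {v w : Fin n} (hvw : v ≠ w)
    (hv : 1 ≤ e v) (hw : 1 ≤ e w) : single v 1 + single w 1 ≤ e := by
  rw [Finsupp.le_def]
  intro x
  rw [Finsupp.add_apply, Finsupp.single_apply, Finsupp.single_apply]
  by_cases h1 : v = x
  · subst h1
    rw [if_pos rfl, if_neg fun h => hvw h.symm]
    omega
  · rw [if_neg h1]
    by_cases h2 : w = x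
    · subst h2; rw [if_pos rfl]; omega
    · rw [if_neg h2]; omega

/-- The combinatorial core. -/
lemma core (G : SimpleGraph (Fin n)) (xi xj : Fin n) (e : Fin n →₀ ℕ) (A : Finset (Fin n))
    (hA : monomial (indic A) (1 : K) ∈ symbPow K n (edgeIdeal K n G) 2)
    (hle : indic A ≤ e + single xi 1 + single xj 1) :
    (∃ v w, (delVerts n G {xi, xj}).Adj v w ∧ single v 1 + single w 1 ≤ e) ∨
    (∃ p q, (G.Adj xi p ∧ p ≠ xj ∧ G.Adj xj q ∧ q ≠ xi ∧ p ≠ q) ∧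
      single p 1 + single q 1 ≤ e) ∨
    (∃ t, (G.Adj xi t ∧ G.Adj xj t) ∧ single t 1 ≤ e) := by
  classical
  have hAe : ∀ v ∈ A, v ≠ xi → v ≠ xj → 1 ≤ e v := by
    intro v hv h1 h2
    have hh := Finsupp.le_def.1 hle v
    rw [indic_apply, if_pos hv, Finsupp.add_apply, Finsupp.add_apply,
      Finsupp.single_eq_of_ne' fun h => h1 h.symm,
      Finsupp.single_eq_of_ne' fun h => h2 h.symm] at hh
    omega
  by_cases hB : ∃ v w, v ∈ A ∧ w ∈ A ∧ v ≠ xi ∧ v ≠ xj ∧ w ≠ xi ∧ w ≠ xj ∧ G.Adj v w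
  · obtain ⟨v, w, hvA, hwA, hv1, hv2, hw1, hw2, hvw⟩ := hB
    left
    refine ⟨v, w, (⟨hvw, ?_, ?_⟩ : G.Adj v w ∧ v ∉ ({xi, xj} : Set (Fin n)) ∧ w ∉ ({xi, xj} : Set (Fin n))), pair_le e hvw.ne (hAe v hvA hv1 hv2) (hAe w hwA hw1 hw2)⟩
    · rintro (h | h) <;> simp_all
    · rintro (h | h) <;> simp_all
  · push_neg at hB
    obtain ⟨a, b, haA, hbA, hai, hbi, hab⟩ := edge_avoiding G A hA xi
    have hp : ∃ p ∈ A, p ≠ xi ∧ p ≠ xj ∧ G.Adj xj p := by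
      by_cases haj : a = xj
      · subst haj; exact ⟨b, hbA, hbi, hab.ne', hab⟩
      · by_cases hbj : b = xj
        · subst hbj; exact ⟨a, haA, hai, hab.ne, hab.symm⟩
        · exact absurd hab (hB a b haA hbA hai haj hbi hbj)
    obtain ⟨a', b', haA', hbA', haj', hbj', hab'⟩ := edge_avoiding G A hA xj
    have hq : ∃ q ∈ A, q ≠ xi ∧ q ≠ xj ∧ G.Adj xi q := by
      by_cases hai' : a' = xi
      · subst hai'; exact ⟨b', hbA', hab'.ne', hbj', hab'⟩
      · by_cases hbi' : b' = xi
        · subst hbi'; exact ⟨a', haA', hab'.ne, haj', hab'.symm⟩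
        · exact absurd hab' (hB a' b' haA' hbA' hai' haj' hbi' hbj')
    obtain ⟨p, hpA, hpi, hpj, hpadj⟩ := hp
    obtain ⟨q, hqA, hqi, hqj, hqadj⟩ := hq
    by_cases hpq : p = q
    · subst hpq
      exact Or.inr (Or.inr ⟨p, ⟨hqadj, hpadj⟩,
        Finsupp.single_le_iff.2 (hAe p hpA hpi hpj)⟩)
    · exact Or.inr (Or.inl ⟨q, p, ⟨hqadj, hqj, hpadj, hpi, fun h => hpq h.symm⟩,
        pair_le e (fun h => hpq h.symm) (hAe q hqA hqi hqj) (hAe p hpA hpi hpj)⟩)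

lemma mem_colonOf {I : Ideal (MvPolynomial (Fin n) K)} {u f : MvPolynomial (Fin n) K} :
    f ∈ colonOf K n I u ↔ f * u ∈ I := by
  rw [colonOf]
  exact Submodule.mem_colon_span_singleton.trans (by rw [smul_eq_mul])

end

end SspAux

open SspAux Finsupp

/-- For any edge `x_i x_j` of `G`,
`(I(G)^{2} : x_i x_j) = I(G - {x_i, x_j}) + (x_p x_q : x_p ∈ N_{G-x_j}(x_i),
x_q ∈ N_{G-x_i}(x_j), x_p ≠ x_q) + (x_t : x_t ∈ N_G(x_i) ∩ N_G(x_j))`. -/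
theorem ssp_two_colon_edge_structure
    (K : Type) [Field K] (n : ℕ) (G : SimpleGraph (Fin n)) (xi xj : Fin n)
    (hadj : G.Adj xi xj) :
    colonOf K n (ssp K n (edgeIdeal K n G) 2) ((X xi : MvPolynomial (Fin n) K) * X xj) =
      edgeIdeal K n (delVerts n G {xi, xj}) +
        Ideal.span {m | ∃ p q : Fin n, G.Adj xi p ∧ p ≠ xj ∧ G.Adj xj q ∧ q ≠ xi ∧
          p ≠ q ∧ m = (X p : MvPolynomial (Fin n) K) * X q} +
        Ideal.span {m | ∃ t : Fin n, G.Adj xi t ∧ G.Adj xj t ∧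
          m = (X t : MvPolynomial (Fin n) K)} := by
  classical
  have hij : xi ≠ xj := hadj.ne
  have hssp : ssp K n (edgeIdeal K n G) 2 =
      Ideal.span ((fun d => monomial d (1 : K)) ''
        {d | (∃ A : Finset (Fin n), d = indic A) ∧
          monomial d (1 : K) ∈ symbPow K n (edgeIdeal K n G) 2}) := by
    rw [ssp, sqfreePart]
    congr 1
    ext m
    constructor
    · rintro ⟨hm, A, rfl⟩
      exact ⟨indic A, ⟨⟨A, rfl⟩, by rwa [← prod_X_indic]⟩, (prod_X_indic A).symm⟩
    · rintro ⟨d, ⟨⟨A, rfl⟩, hd⟩, rfl⟩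
      exact ⟨hd, A, (prod_X_indic A).symm⟩
  have hE1 : edgeIdeal K n (delVerts n G {xi, xj}) =
      Ideal.span ((fun d => monomial d (1 : K)) ''
        {d | ∃ v w, (delVerts n G {xi, xj}).Adj v w ∧ d = single v 1 + single w 1}) := by
    rw [edgeIdeal]
    congr 1
    ext m
    constructor
    · rintro ⟨v, w, hvw, rfl⟩
      exact ⟨single v 1 + single w 1, ⟨v, w, hvw, rfl⟩, (X_mul_X v w).symm⟩
    · rintro ⟨d, ⟨v, w, hvw, rfl⟩, rfl⟩
      exact ⟨v, w, hvw, (X_mul_X v w).symm⟩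
  have hE2 : Ideal.span {m | ∃ p q : Fin n, G.Adj xi p ∧ p ≠ xj ∧ G.Adj xj q ∧ q ≠ xi ∧
          p ≠ q ∧ m = (X p : MvPolynomial (Fin n) K) * X q} =
      Ideal.span ((fun d => monomial d (1 : K)) ''
        {d | ∃ p q, G.Adj xi p ∧ p ≠ xj ∧ G.Adj xj q ∧ q ≠ xi ∧ p ≠ q ∧
          d = single p 1 + single q 1}) := by
    congr 1
    ext m
    constructor
    · rintro ⟨p, q, h1, h2, h3, h4, h5, rfl⟩
      exact ⟨single p 1 + single q 1, ⟨p, q, h1, h2, h3, h4, h5, rfl⟩, (X_mul_X p q).symm⟩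
    · rintro ⟨d, ⟨p, q, h1, h2, h3, h4, h5, rfl⟩, rfl⟩
      exact ⟨p, q, h1, h2, h3, h4, h5, (X_mul_X p q).symm⟩
  have hE3 : Ideal.span {m | ∃ t : Fin n, G.Adj xi t ∧ G.Adj xj t ∧
          m = (X t : MvPolynomial (Fin n) K)} =
      Ideal.span ((fun d => monomial d (1 : K)) ''
        {d | ∃ t, G.Adj xi t ∧ G.Adj xj t ∧ d = single t 1}) := by
    congr 1
    ext m
    constructor
    · rintro ⟨t, h1, h2, rfl⟩
      exact ⟨single t 1, ⟨t, h1, h2, rfl⟩, (X_eq t).symm⟩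
    · rintro ⟨d, ⟨t, h1, h2, rfl⟩, rfl⟩
      exact ⟨t, h1, h2, (X_eq t).symm⟩
  apply le_antisymm
  · intro f hf
    rw [mem_colonOf, hssp] at hf
    rw [hE1, hE2, hE3, Submodule.add_eq_sup, Submodule.add_eq_sup, ← Ideal.span_union,
      ← Ideal.span_union, ← Set.image_union, ← Set.image_union]
    rw [mem_ideal_span_monomial_image]
    intro e he
    have hmem : e + single xi 1 + single xj 1 ∈
        (f * ((X xi : MvPolynomial (Fin n) K) * X xj)).support := by
      rw [← mul_assoc, MvPolynomial.support_mul_X, MvPolynomial.support_mul_X]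
      exact Finset.mem_map.2 ⟨e + single xi 1, Finset.mem_map.2 ⟨e, he, rfl⟩, rfl⟩
    obtain ⟨d, ⟨⟨A, rfl⟩, hd⟩, hdle⟩ := MvPolynomial.mem_ideal_span_monomial_image.1 hf _ hmem
    rcases core G xi xj e A hd hdle with ⟨v, w, h1, h2⟩ | ⟨p, q, h1, h2⟩ | ⟨t, h1, h2⟩
    · exact ⟨_, Set.subset_union_left (Set.subset_union_left ⟨v, w, h1, rfl⟩), h2⟩
    · obtain ⟨ha, hb, hc, hdq, hne⟩ := h1
      exact ⟨_, Set.subset_union_left (Set.subset_union_right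
        ⟨p, q, ha, hb, hc, hdq, hne, rfl⟩), h2⟩
    · exact ⟨_, Set.subset_union_right ⟨t, h1.1, h1.2, rfl⟩, h2⟩
  · rw [Submodule.add_eq_sup, Submodule.add_eq_sup]
    refine sup_le (sup_le ?_ ?_) ?_
    · rw [edgeIdeal, Ideal.span_le]
      rintro m ⟨v, w, hvw, rfl⟩
      obtain ⟨hvwG, hvU, hwU⟩ := (hvw : G.Adj v w ∧ v ∉ ({xi, xj} : Set (Fin n)) ∧ w ∉ ({xi, xj} : Set (Fin n)))
      rw [SetLike.mem_coe, mem_colonOf]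
      have hvnei : v ≠ xi := fun h => hvU (by rw [h]; exact Set.mem_insert _ _)
      have hvnej : v ≠ xj := fun h => hvU (by rw [h]; exact Set.mem_insert_of_mem _ rfl)
      have hwnei : w ≠ xi := fun h => hwU (by rw [h]; exact Set.mem_insert _ _)
      have hwnej : w ≠ xj := fun h => hwU (by rw [h]; exact Set.mem_insert_of_mem _ rfl)
      have hvw' : v ≠ w := hvwG.ne
      have hprod : (X v : MvPolynomial (Fin n) K) * X w * (X xi * X xj) =
          monomial (indic (insert v (insert w (insert xi {xj})))) 1 := by
        rw [← prod_X_indic,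
          Finset.prod_insert (by simp [hvw', hvnei, hvnej]),
          Finset.prod_insert (by simp [hwnei, hwnej]),
          Finset.prod_insert (by simp [hij]), Finset.prod_singleton, mul_assoc]
      rw [hssp, hprod]
      apply Ideal.subset_span
      refine ⟨_, ⟨⟨_, rfl⟩, ?_⟩, rfl⟩
      rw [← hprod]
      apply mem_symbPow_two G
      intro P hP hle
      rw [pow_two]
      exact Ideal.mul_mem_mul (hle (Ideal.subset_span ⟨v, w, hvwG, rfl⟩))
        (hle (Ideal.subset_span ⟨xi, xj, hadj, rfl⟩))
    · rw [Ideal.span_le]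
      rintro m ⟨p, q, hip, hpj, hjq, hqi, hpq, rfl⟩
      rw [SetLike.mem_coe, mem_colonOf]
      have hpi : p ≠ xi := hip.ne'
      have hqj : q ≠ xj := hjq.ne'
      have hprod : (X p : MvPolynomial (Fin n) K) * X q * (X xi * X xj) =
          monomial (indic (insert p (insert q (insert xi {xj})))) 1 := by
        rw [← prod_X_indic,
          Finset.prod_insert (by simp [hpq, hpi, hpj]),
          Finset.prod_insert (by simp [hqi, hqj]),
          Finset.prod_insert (by simp [hij]), Finset.prod_singleton, mul_assoc]
      rw [hssp, hprod]
      apply Ideal.subset_span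
      refine ⟨_, ⟨⟨_, rfl⟩, ?_⟩, rfl⟩
      rw [← hprod]
      apply mem_symbPow_two G
      intro P hP hle
      have h1 : (X xi : MvPolynomial (Fin n) K) * X p ∈ P :=
        hle (Ideal.subset_span ⟨xi, p, hip, rfl⟩)
      have h2 : (X xj : MvPolynomial (Fin n) K) * X q ∈ P :=
        hle (Ideal.subset_span ⟨xj, q, hjq, rfl⟩)
      have heq : (X p : MvPolynomial (Fin n) K) * X q * (X xi * X xj) =
          (X xi * X p) * (X xj * X q) := by ring
      rw [heq, pow_two]
      exact Ideal.mul_mem_mul h1 h2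
    · rw [Ideal.span_le]
      rintro m ⟨t, hit, hjt, rfl⟩
      rw [SetLike.mem_coe, mem_colonOf]
      have hti : t ≠ xi := hit.ne'
      have htj : t ≠ xj := hjt.ne'
      have hprod : (X t : MvPolynomial (Fin n) K) * (X xi * X xj) =
          monomial (indic (insert t (insert xi {xj}))) 1 := by
        rw [← prod_X_indic,
          Finset.prod_insert (by simp [hti, htj]),
          Finset.prod_insert (by simp [hij]), Finset.prod_singleton]
      rw [hssp, hprod]
      apply Ideal.subset_span
      refine ⟨_, ⟨⟨_, rfl⟩, ?_⟩, rfl⟩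
      rw [← hprod]
      apply mem_symbPow_two G
      intro P hP hle
      have h1 : (X xi : MvPolynomial (Fin n) K) * X xj ∈ P :=
        hle (Ideal.subset_span ⟨xi, xj, hadj, rfl⟩)
      have h2 : (X xi : MvPolynomial (Fin n) K) * X t ∈ P :=
        hle (Ideal.subset_span ⟨xi, t, hit, rfl⟩)
      have h3 : (X xj : MvPolynomial (Fin n) K) * X t ∈ P :=
        hle (Ideal.subset_span ⟨xj, t, hjt, rfl⟩)
      by_cases hXi : (X xi : MvPolynomial (Fin n) K) ∈ P
      · by_cases hXj : (X xj : MvPolynomial (Fin n) K) ∈ P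
        · rw [pow_two]
          exact Ideal.mul_mem_left _ _ (Ideal.mul_mem_mul hXi hXj)
        · have hXt : (X t : MvPolynomial (Fin n) K) ∈ P :=
            (hP.mem_or_mem h3).resolve_left hXj
          have heq : (X t : MvPolynomial (Fin n) K) * (X xi * X xj) =
              X xj * (X xi * X t) := by ring
          rw [heq, pow_two]
          exact Ideal.mul_mem_left _ _ (Ideal.mul_mem_mul hXi hXt)
      · have hXj : (X xj : MvPolynomial (Fin n) K) ∈ P :=
          (hP.mem_or_mem h1).resolve_left hXi
        have hXt : (X t : MvPolynomial (Fin n) K) ∈ P :=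
          (hP.mem_or_mem h2).resolve_left hXi
        have heq : (X t : MvPolynomial (Fin n) K) * (X xi * X xj) =
            X xi * (X xj * X t) := by ring
        rw [heq, pow_two]
        exact Ideal.mul_mem_left _ _ (Ideal.mul_mem_mul hXj hXt)
end
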